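/- Let T = (V, A) be a polytree and I⁰, Iᵗ independent sets of size k with no rigid tokens and no blocking arcs. Then there exists a set of directed paths satisfying the path-set conditions if and only if there exist mappings f : I⁰ → N⁺(I⁰) and g : Iᵗ → N⁻(Iᵗ) such that: (C1) f and g are injective; (C2) (s, f(s)) ∈ A for all s ∈ I⁰; (C3) (g(t), t) ∈ A for all t ∈ Iᵗ; and (C4) w(e; f(I⁰), g(Iᵗ)) ≥ 0 for every arc e ∈ A. -/

import Mathlib

open scoped Classical

variable {V : Type*}

/-- The underlying undirected simple graph of a digraph given by its arc relation. -/
def underlying (A : V → V → Prop) : SimpleGraph V := SimpleGraph.fromRel A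

/-- A polytree: a loopless digraph without antiparallel arcs whose underlying graph is a tree. -/
def IsPolytree (A : V → V → Prop) : Prop :=
  (∀ v, ¬ A v v) ∧ (∀ u v, A u v → ¬ A v u) ∧ (underlying A).IsTree

/-- `x` lies in the weakly connected component of `T - (a,b)` containing the tail `a`. -/
def InCminus (A : V → V → Prop) (a b x : V) : Prop :=
  ((underlying A).deleteEdges {s(a, b)}).Reachable a x

/-- `w((a,b); X, Y) = |C⁻ ∩ X| - |C⁻ ∩ Y|`. -/
noncomputable def wArc [Fintype V] [DecidableEq V] (A : V → V → Prop)
    (X Y : Finset V) (a b : V) : ℤ :=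
  ((X.filter fun x => InCminus A a b x).card : ℤ) -
    ((Y.filter fun x => InCminus A a b x).card : ℤ)

/-- Independence in the underlying undirected graph. -/
def IndepF (A : V → V → Prop) (I : Finset V) : Prop :=
  ∀ u ∈ I, ∀ v ∈ I, ¬ (underlying A).Adj u v

/-- One token-sliding step along an arc, in its direction. -/
def IsStep [DecidableEq V] (A : V → V → Prop) (I J : Finset V) : Prop :=
  ∃ u v, A u v ∧ I \ J = {u} ∧ J \ I = {v}

/-- A reconfiguration sequence of independent sets under directed token sliding. -/
def IsReconfSeq [DecidableEq V] (A : V → V → Prop) {ℓ : ℕ}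
    (f : Fin (ℓ + 1) → Finset V) : Prop :=
  (∀ i, IndepF A (f i)) ∧ ∀ i : Fin ℓ, IsStep A (f i.castSucc) (f i.succ)

/-- `I` is reconfigurable into `J` under directed token sliding. -/
def Reconfigurable [DecidableEq V] (A : V → V → Prop) (I J : Finset V) : Prop :=
  ∃ (ℓ : ℕ) (f : Fin (ℓ + 1) → Finset V),
    IsReconfSeq A f ∧ f 0 = I ∧ f (Fin.last ℓ) = J

/-- A directed path in the digraph `A`, given by its (distinct) vertices in order. -/
structure DirPath (A : V → V → Prop) where
  len : ℕ
  vtx : Fin (len + 1) → V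
  inj : Function.Injective vtx
  arc : ∀ i : Fin len, A (vtx i.castSucc) (vtx i.succ)

namespace DirPath
variable {A : V → V → Prop}
/-- The source of a directed path. -/
def src (p : DirPath A) : V := p.vtx 0
/-- The sink of a directed path. -/
def snk (p : DirPath A) : V := p.vtx (Fin.last p.len)
/-- The second vertex `s'(P)` of a directed path. -/
def sndVtx (p : DirPath A) : V := p.vtx ⟨min 1 p.len, by omega⟩
/-- The second-to-last vertex `t'(P)` of a directed path. -/
def penVtx (p : DirPath A) : V := p.vtx ⟨p.len - 1, by omega⟩
/-- `v` is a vertex of the path `p`. -/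
def mem (p : DirPath A) (v : V) : Prop := ∃ i, p.vtx i = v
/-- `x` is an internal vertex of `p` (neither source nor sink). -/
def internal (p : DirPath A) (x : V) : Prop :=
  ∃ i : Fin (p.len + 1), p.vtx i = x ∧ i ≠ 0 ∧ i ≠ Fin.last p.len
end DirPath

/-- A directed path matching from `X` to `Y`: distinct sources forming `X`,
distinct sinks forming `Y`. -/
def IsDPM [DecidableEq V] {A : V → V → Prop} {k : ℕ}
    (X Y : Finset V) (P : Fin k → DirPath A) : Prop :=
  (Function.Injective fun i => (P i).src) ∧ (Function.Injective fun i => (P i).snk) ∧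
  (Finset.univ.image fun i => (P i).src) = X ∧ (Finset.univ.image fun i => (P i).snk) = Y

/-- The path-set conditions (P1)–(P4). -/
def PathSetConds [DecidableEq V] {A : V → V → Prop} {k : ℕ}
    (X Y : Finset V) (P : Fin k → DirPath A) : Prop :=
  (∀ i, 2 ≤ (P i).len) ∧ IsDPM X Y P ∧
  (∀ i j, i ≠ j → (P i).sndVtx ≠ (P j).sndVtx) ∧
  (∀ i j, i ≠ j → (P i).penVtx ≠ (P j).penVtx)

/-- Length of the (unique, when it exists) directed path from `u` to `v`. -/
noncomputable def ddist (A : V → V → Prop) (u v : V) : ℕ :=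
  sInf {n | ∃ p : DirPath A, p.src = u ∧ p.snk = v ∧ p.len = n}

/-- A biased path pair: a common internal vertex `x` with
`dist(s(p),x) > dist(s(q),x)` and `dist(x,t(p)) > dist(x,t(q))`. -/
def BiasedPair (A : V → V → Prop) (p q : DirPath A) : Prop :=
  ∃ x, p.internal x ∧ q.internal x ∧
    ddist A q.src x < ddist A p.src x ∧ ddist A x q.snk < ddist A x p.snk

/-- A rigid token: `v ∈ X ∩ Y` and all incident arcs have `w`-value `0`. -/
def RigidTok [Fintype V] [DecidableEq V] (A : V → V → Prop) (X Y : Finset V) (v : V) : Prop :=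
  v ∈ X ∧ v ∈ Y ∧ ∀ a b, A a b → (a = v ∨ b = v) → wArc A X Y a b = 0

/-- A blocking arc: `w((u,v)) = 1` and every other arc incident to `u` or `v`
has `w`-value `0`. -/
def BlockingArc [Fintype V] [DecidableEq V] (A : V → V → Prop) (X Y : Finset V)
    (u v : V) : Prop :=
  A u v ∧ wArc A X Y u v = 1 ∧
    ∀ a b, A a b → (a, b) ≠ (u, v) → (a = u ∨ b = u ∨ a = v ∨ b = v) →
      wArc A X Y a b = 0

/-- A trajectory of a single token along a reconfiguration sequence. -/
def IsTrajectory [DecidableEq V] (A : V → V → Prop) {ℓ : ℕ}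
    (f : Fin (ℓ + 1) → Finset V) (g : Fin (ℓ + 1) → V) : Prop :=
  (∀ i, g i ∈ f i) ∧ ∀ i : Fin ℓ,
    g i.succ = g i.castSucc ∨
      (f i.castSucc \ f i.succ = {g i.castSucc} ∧ f i.succ \ f i.castSucc = {g i.succ})

/-- Number of steps of a reconfiguration sequence sliding a token from `u` to `v`. -/
noncomputable def movesAlong [DecidableEq V] {ℓ : ℕ} (f : Fin (ℓ + 1) → Finset V)
    (u v : V) : ℕ :=
  (Finset.univ.filter fun i : Fin ℓ =>
    f i.castSucc \ f i.succ = {u} ∧ f i.succ \ f i.castSucc = {v}).card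

/-- Number of forward arc traversals of a walk with vertex list `l`. -/
noncomputable def fwdCount (A : V → V → Prop) (l : List V) : ℕ :=
  (l.zip l.tail).countP fun p => decide (A p.1 p.2)

/-- Number of reverse arc traversals of a walk with vertex list `l`. -/
noncomputable def revCount (A : V → V → Prop) (l : List V) : ℕ :=
  (l.zip l.tail).countP fun p => decide (A p.2 p.1)

/-- Number of traversals of the ordered pair `(a, b)` by a walk with vertex list `l`. -/
def traverseCount [DecidableEq V] (l : List V) (a b : V) : ℕ :=
  (l.zip l.tail).count (a, b)

/-- A vertex `v` touches a directed path `p` if `N[v]` meets the vertex set of `p`. -/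
def Touches (A : V → V → Prop) (v : V) (p : DirPath A) : Prop :=
  ∃ u, p.mem u ∧ (u = v ∨ (underlying A).Adj v u)

/-- Independence in an undirected graph (for undirected token sliding). -/
def UIndep (G : SimpleGraph V) (I : Finset V) : Prop :=
  ∀ u ∈ I, ∀ v ∈ I, ¬ G.Adj u v

/-- One undirected token-sliding step along an edge. -/
def UIsStep [DecidableEq V] (G : SimpleGraph V) (I J : Finset V) : Prop :=
  ∃ u v, G.Adj u v ∧ I \ J = {u} ∧ J \ I = {v}

/-- Reconfigurability under (undirected) token sliding. -/
def UReconfigurable [DecidableEq V] (G : SimpleGraph V) (I J : Finset V) : Prop :=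
  ∃ (ℓ : ℕ) (f : Fin (ℓ + 1) → Finset V),
    (∀ i, UIndep G (f i)) ∧ (∀ i : Fin ℓ, UIsStep G (f i.castSucc) (f i.succ)) ∧
    f 0 = I ∧ f (Fin.last ℓ) = J

section Infra

variable {A : V → V → Prop}

lemma arc_ne (hT : IsPolytree A) {u v : V} (h : A u v) : u ≠ v := by
  rintro rfl; exact hT.1 u h

lemma underlying_adj (hT : IsPolytree A) {u v : V} (h : A u v) : (underlying A).Adj u v :=
  ⟨arc_ne hT h, Or.inl h⟩

lemma bridge_of_arc (hT : IsPolytree A) {u v : V} (h : A u v) :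
    (underlying A).IsBridge s(u, v) :=
  (SimpleGraph.isAcyclic_iff_forall_adj_isBridge.mp hT.2.2.IsAcyclic) (underlying_adj hT h)

lemma not_reach_del (hT : IsPolytree A) {u v : V} (h : A u v) :
    ¬ ((underlying A).deleteEdges {s(u, v)}).Reachable u v :=
  SimpleGraph.isBridge_iff.mp (bridge_of_arc hT h)

/-- n-step reachability. -/
def StepN (A : V → V → Prop) : ℕ → V → V → Prop
  | 0, u, v => u = v
  | n+1, u, v => ∃ w, A u w ∧ StepN A n w v

lemma stepN_tail {n : ℕ} {u v w : V} (h : StepN A n u v) (hvw : A v w) :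
    StepN A (n+1) u w := by
  induction n generalizing u with
  | zero => exact ⟨w, h ▸ hvw, rfl⟩
  | succ n ih => obtain ⟨x, hx, hst⟩ := h; exact ⟨x, hx, ih hst⟩

lemma rtg_iff_stepN {u v : V} : Relation.ReflTransGen A u v ↔ ∃ n, StepN A n u v := by
  constructor
  · intro h
    induction h with
    | refl => exact ⟨0, rfl⟩
    | tail _ hstep ih => obtain ⟨n, hn⟩ := ih; exact ⟨n+1, stepN_tail hn hstep⟩
  · rintro ⟨n, hn⟩
    induction n generalizing u with
    | zero => exact hn ▸ Relation.ReflTransGen.refl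
    | succ n ih => obtain ⟨w, hw, hst⟩ := hn; exact Relation.ReflTransGen.head hw (ih hst)

lemma escape (hT : IsPolytree A) {u v : V} (huv : A u v) :
    ∀ (m : ℕ) (w : V), StepN A m w u →
      ((underlying A).deleteEdges {s(u, v)}).Reachable w u ∨ ∃ m' < m, StepN A m' v u := by
  intro m
  induction m with
  | zero => intro w h; exact Or.inl (by cases h; exact SimpleGraph.Reachable.refl _)
  | succ m ih =>
    rintro w ⟨w', haw, hst⟩
    rcases ih w' hst with hr | ⟨m', hm', hst'⟩
    · by_cases hc : w = u ∧ w' = v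
      · exact Or.inr ⟨m, Nat.lt_succ_self m, hc.2 ▸ hst⟩
      · left
        have hne : s(w, w') ≠ s(u, v) := by
          intro hs
          rcases Sym2.eq_iff.mp hs with ⟨rfl, rfl⟩ | ⟨rfl, rfl⟩
          · exact hc ⟨rfl, rfl⟩
          · exact hT.2.1 _ _ huv haw
        have hadj : ((underlying A).deleteEdges {s(u, v)}).Adj w w' := by
          rw [SimpleGraph.deleteEdges_adj]
          exact ⟨underlying_adj hT haw, by simpa using hne⟩
        exact hadj.reachable.trans hr
    · exact Or.inr ⟨m', hm'.trans (Nat.lt_succ_self m), hst'⟩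

lemma noDirCycleN (hT : IsPolytree A) {u v : V} (huv : A u v) :
    ∀ n, ¬ StepN A n v u := by
  intro n
  induction n using Nat.strong_induction_on with
  | _ n ih =>
    intro h
    rcases escape hT huv n v h with hr | ⟨m', hm', h'⟩
    · exact not_reach_del hT huv hr.symm
    · exact ih m' hm' h'

lemma noDirCycle (hT : IsPolytree A) {u v : V} (huv : A u v)
    (h : Relation.ReflTransGen A v u) : False := by
  obtain ⟨n, hn⟩ := rtg_iff_stepN.mp h
  exact noDirCycleN hT huv n hn


section Infra2

variable {A : V → V → Prop}

/-- RTG between positions of a directed path. -/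
lemma dirPath_rtg (p : DirPath A) :
    ∀ (d : ℕ) (i j : Fin (p.len + 1)), (i : ℕ) + d = j → Relation.ReflTransGen A (p.vtx i) (p.vtx j) := by
  intro d
  induction d with
  | zero => intro i j h; have : i = j := Fin.ext (by omega); exact this ▸ Relation.ReflTransGen.refl
  | succ d ih =>
    intro i j h
    have hlt : (i : ℕ) + d < p.len := by omega
    have harc := p.arc ⟨(i : ℕ) + d, hlt⟩
    have h1 : (⟨(i : ℕ) + d, hlt⟩ : Fin p.len).castSucc = ⟨(i : ℕ) + d, by omega⟩ := rfl
    have h2 : (⟨(i : ℕ) + d, hlt⟩ : Fin p.len).succ = j := Fin.ext (by simp; omega)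
    rw [h1, h2] at harc
    exact Relation.ReflTransGen.tail (ih i ⟨(i : ℕ) + d, by omega⟩ rfl) harc

lemma dirPath_rtg_le (p : DirPath A) (i j : Fin (p.len + 1)) (h : i ≤ j) :
    Relation.ReflTransGen A (p.vtx i) (p.vtx j) :=
  dirPath_rtg p ((j : ℕ) - i) i j (by omega)

lemma rtg_src_snk (p : DirPath A) : Relation.ReflTransGen A p.src p.snk :=
  dirPath_rtg_le p 0 (Fin.last p.len) (Fin.zero_le _)

/-- Prepend a vertex to a directed path. -/
def DirPath.prepend (p : DirPath A) (u : V) (h : A u p.src) (hu : u ∉ Set.range p.vtx) :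
    DirPath A where
  len := p.len + 1
  vtx := Fin.cons u p.vtx
  inj := Fin.cons_injective_iff.mpr ⟨hu, p.inj⟩
  arc := by
    intro i
    induction i using Fin.cases with
    | zero => exact h
    | succ j =>
      have h1 : (j.succ.castSucc : Fin (p.len + 2)) = (j.castSucc).succ := rfl
      rw [h1, Fin.cons_succ, Fin.cons_succ]
      exact p.arc j

@[simp] lemma prepend_len (p : DirPath A) (u h hu) : (p.prepend u h hu).len = p.len + 1 := rfl
@[simp] lemma prepend_src (p : DirPath A) (u h hu) : (p.prepend u h hu).src = u := rfl
@[simp] lemma prepend_snk (p : DirPath A) (u h hu) : (p.prepend u h hu).snk = p.snk := by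
  show (Fin.cons u p.vtx : Fin (p.len + 2) → V) (Fin.last (p.len + 1)) = p.snk
  have h1 : (Fin.last (p.len + 1)) = (Fin.last p.len).succ := rfl
  rw [h1, Fin.cons_succ]; rfl

lemma prepend_sndVtx (p : DirPath A) (u h hu) : (p.prepend u h hu).sndVtx = p.src := by
  show (Fin.cons u p.vtx : Fin (p.len + 2) → V) ⟨min 1 (p.len + 1), by omega⟩ = p.src
  have h1 : (⟨min 1 (p.len + 1), by omega⟩ : Fin (p.len + 2)) = (0 : Fin (p.len + 1)).succ :=
    Fin.ext (by simp)
  rw [h1, Fin.cons_succ]; rfl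

lemma prepend_penVtx (p : DirPath A) (u h hu) (hp : 1 ≤ p.len) :
    (p.prepend u h hu).penVtx = p.penVtx := by
  show (Fin.cons u p.vtx : Fin (p.len + 2) → V) ⟨p.len + 1 - 1, by omega⟩ = p.vtx ⟨p.len - 1, by omega⟩
  have h1 : (⟨p.len + 1 - 1, by omega⟩ : Fin (p.len + 2)) = (⟨p.len - 1, by omega⟩ : Fin (p.len + 1)).succ :=
    Fin.ext (by simp; omega)
  rw [h1, Fin.cons_succ]

/-- Append a vertex to a directed path. -/
def DirPath.append (p : DirPath A) (w : V) (h : A p.snk w) (hw : w ∉ Set.range p.vtx) :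
    DirPath A where
  len := p.len + 1
  vtx := Fin.snoc p.vtx w
  inj := by
    intro i j hij
    induction i using Fin.lastCases with
    | last =>
      induction j using Fin.lastCases with
      | last => rfl
      | cast j =>
        rw [Fin.snoc_last, Fin.snoc_castSucc] at hij
        exact absurd ⟨j, hij.symm⟩ hw
    | cast i =>
      induction j using Fin.lastCases with
      | last =>
        rw [Fin.snoc_last, Fin.snoc_castSucc] at hij
        exact absurd ⟨i, hij⟩ hw
      | cast j =>
        rw [Fin.snoc_castSucc, Fin.snoc_castSucc] at hij
        rw [p.inj hij]
  arc := by
    intro i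
    induction i using Fin.lastCases with
    | last =>
      rw [Fin.succ_last, Fin.snoc_last, Fin.snoc_castSucc]
      exact h
    | cast j =>
      rw [Fin.succ_castSucc, Fin.snoc_castSucc, Fin.snoc_castSucc]
      exact p.arc j

@[simp] lemma append_len (p : DirPath A) (w h hw) : (p.append w h hw).len = p.len + 1 := rfl
@[simp] lemma append_snk (p : DirPath A) (w h hw) : (p.append w h hw).snk = w := by
  show (Fin.snoc p.vtx w : Fin (p.len + 2) → V) (Fin.last (p.len + 1)) = w
  rw [Fin.snoc_last]
@[simp] lemma append_src (p : DirPath A) (w h hw) : (p.append w h hw).src = p.src := by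
  show (Fin.snoc p.vtx w : Fin (p.len + 2) → V) 0 = p.src
  have h1 : (0 : Fin (p.len + 2)) = (0 : Fin (p.len + 1)).castSucc := rfl
  rw [h1, Fin.snoc_castSucc]; rfl
lemma append_penVtx (p : DirPath A) (w h hw) : (p.append w h hw).penVtx = p.snk := by
  show (Fin.snoc p.vtx w : Fin (p.len + 2) → V) ⟨p.len + 1 - 1, by omega⟩ = p.snk
  have h1 : (⟨p.len + 1 - 1, by omega⟩ : Fin (p.len + 2)) = (Fin.last p.len).castSucc :=
    Fin.ext (by simp)
  rw [h1, Fin.snoc_castSucc]; rfl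

lemma arc_ne' (hT : IsPolytree A) {u v : V} (h : A u v) : u ≠ v := by
  rintro rfl; exact hT.1 u h

/-- In a polytree, directed reachability yields a directed path,
whose second vertex we control. -/
lemma exists_dirPath (hT : IsPolytree A)
    (hnc : ∀ u v : V, A u v → Relation.ReflTransGen A v u → False)
    {u v : V} (h : Relation.ReflTransGen A u v) :
    ∃ p : DirPath A, p.src = u ∧ p.snk = v := by
  induction h using Relation.ReflTransGen.head_induction_on with
  | refl =>
    exact ⟨⟨0, fun _ => v, fun i j _ => Fin.ext (by omega), fun i => i.elim0⟩, rfl, rfl⟩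
  | head hstep _ ih =>
    obtain ⟨p, hsrc, hsnk⟩ := ih
    rename_i u' w' _
    have harc : A u' p.src := hsrc ▸ hstep
    have hmem : u' ∉ Set.range p.vtx := by
      rintro ⟨i, hi⟩
      exact hnc u' p.src harc (hi ▸ dirPath_rtg_le p 0 i (Fin.zero_le i))
    exact ⟨p.prepend u' harc hmem, rfl, by simp [hsnk]⟩

end Infra2

section Infra3

variable {A : V → V → Prop}

lemma arc_ne3 (hT : IsPolytree A) {u v : V} (h : A u v) : u ≠ v := by
  rintro rfl; exact hT.1 u h

lemma underlying_adj3 (hT : IsPolytree A) {u v : V} (h : A u v) : (underlying A).Adj u v :=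
  ⟨arc_ne3 hT h, Or.inl h⟩

lemma not_reach_del3 (hT : IsPolytree A) {u v : V} (h : A u v) :
    ¬ ((underlying A).deleteEdges {s(u, v)}).Reachable u v :=
  SimpleGraph.isBridge_iff.mp ((SimpleGraph.isAcyclic_iff_forall_adj_isBridge.mp hT.2.2.IsAcyclic) (underlying_adj3 hT h))

/-- The head side of a deleted arc. -/
def InCplus (A : V → V → Prop) (a b x : V) : Prop :=
  ((underlying A).deleteEdges {s(a, b)}).Reachable b x

lemma cminus_extend {a b x y : V} (hx : InCminus A a b x)
    (hadj : (underlying A).Adj x y) (hne : s(x, y) ≠ s(a, b)) : InCminus A a b y :=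
  hx.trans (SimpleGraph.Adj.reachable (by rw [SimpleGraph.deleteEdges_adj]; exact ⟨hadj, by simpa using hne⟩))

lemma cplus_extend {a b x y : V} (hx : InCplus A a b x)
    (hadj : (underlying A).Adj x y) (hne : s(x, y) ≠ s(a, b)) : InCplus A a b y :=
  hx.trans (SimpleGraph.Adj.reachable (by rw [SimpleGraph.deleteEdges_adj]; exact ⟨hadj, by simpa using hne⟩))

lemma cminus_or_cplus (hT : IsPolytree A) {a b : V} (hab : A a b) (v : V) :
    InCminus A a b v ∨ InCplus A a b v := by
  have hreach : (underlying A).Reachable a v := (hT.2.2.isConnected) a v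
  rw [SimpleGraph.reachable_iff_reflTransGen] at hreach
  induction hreach with
  | refl => exact Or.inl (SimpleGraph.Reachable.refl a)
  | tail _ hadj ih =>
    rename_i x y _
    by_cases hne : s(x, y) = s(a, b)
    · rcases Sym2.eq_iff.mp hne with ⟨rfl, rfl⟩ | ⟨rfl, rfl⟩
      · exact Or.inr (SimpleGraph.Reachable.refl _)
      · exact Or.inl (SimpleGraph.Reachable.refl _)
    · rcases ih with h | h
      · exact Or.inl (cminus_extend h hadj hne)
      · exact Or.inr (cplus_extend h hadj hne)

lemma not_cminus_cplus (hT : IsPolytree A) {a b : V} (hab : A a b) (v : V) :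
    ¬ (InCminus A a b v ∧ InCplus A a b v) := by
  rintro ⟨h1, h2⟩
  exact not_reach_del3 hT hab (h1.trans h2.symm)

lemma cplus_iff_not_cminus (hT : IsPolytree A) {a b : V} (hab : A a b) (v : V) :
    InCplus A a b v ↔ ¬ InCminus A a b v := by
  constructor
  · intro h h'; exact not_cminus_cplus hT hab v ⟨h', h⟩
  · intro h; rcases cminus_or_cplus hT hab v with h' | h'
    · exact absurd h' h
    · exact h'

/-- Along an arc, one cannot enter `C⁻` from outside. -/
lemma no_enter_cminus (hT : IsPolytree A) {a b : V} (hab : A a b) {x y : V}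
    (hxy : A x y) (hy : InCminus A a b y) (hx : ¬ InCminus A a b x) : False := by
  by_cases hne : s(x, y) = s(a, b)
  · rcases Sym2.eq_iff.mp hne with ⟨rfl, rfl⟩ | ⟨rfl, rfl⟩
    · exact hx (SimpleGraph.Reachable.refl _)
    · exact hT.2.1 _ _ hab hxy
  · exact hx (cminus_extend hy ((underlying_adj3 hT hxy).symm) (by rw [Sym2.eq_swap]; exact hne))

/-- `∉ C⁻` propagates forward along directed reachability. -/
lemma not_cminus_forward (hT : IsPolytree A) {a b : V} (hab : A a b) {x y : V}
    (hxy : Relation.ReflTransGen A x y) (hx : ¬ InCminus A a b x) : ¬ InCminus A a b y := by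
  induction hxy with
  | refl => exact hx
  | tail _ hstep ih => exact fun hy => no_enter_cminus hT hab hstep hy ih

end Infra3

section Flow

variable {A : V → V → Prop}

/-- The connected component of `v₀` within the complement of `R`. -/
def compOf (A : V → V → Prop) (R : Finset V) [DecidableEq V] (v₀ : V) : Set V :=
  {u | Relation.ReflTransGen (fun a b => (underlying A).Adj a b ∧ a ∉ R ∧ b ∉ R) v₀ u}

variable [DecidableEq V] {R : Finset V} {v₀ : V}

lemma compOf_self (hv₀ : v₀ ∉ R) : v₀ ∈ compOf A R v₀ := Relation.ReflTransGen.refl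

lemma compOf_not_mem_R (hv₀ : v₀ ∉ R) {u : V} (hu : u ∈ compOf A R v₀) : u ∉ R := by
  induction hu with
  | refl => exact hv₀
  | tail _ hstep _ => exact hstep.2.2

lemma compOf_closed {u w : V} (hu : u ∈ compOf A R v₀) (hv₀ : v₀ ∉ R)
    (hadj : (underlying A).Adj u w) (hw : w ∉ R) : w ∈ compOf A R v₀ :=
  Relation.ReflTransGen.tail hu ⟨hadj, compOf_not_mem_R hv₀ hu, hw⟩

/-- Reachability within the component avoids any edge with an endpoint in `R`. -/
lemma compOf_reach_del {u : V} (hu : u ∈ compOf A R v₀) (hv₀ : v₀ ∉ R) {a b : V}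
    (hb : b ∈ R) : ((underlying A).deleteEdges {s(a, b)}).Reachable v₀ u := by
  induction hu with
  | refl => exact SimpleGraph.Reachable.refl _
  | tail _ hstep ih =>
    refine ih.trans (SimpleGraph.Adj.reachable ?_)
    rw [SimpleGraph.deleteEdges_adj]
    refine ⟨hstep.1, ?_⟩
    simp only [Set.mem_singleton_iff]
    intro hs
    rcases Sym2.eq_iff.mp hs with ⟨rfl, rfl⟩ | ⟨rfl, rfl⟩
    · exact hstep.2.2 hb
    · exact hstep.2.1 hb

variable [Fintype V]

/-- The boundary arcs of the component. -/
noncomputable def bdry (A : V → V → Prop) (R : Finset V) [DecidableEq V] [Fintype V] (v₀ : V) :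
    Finset (V × V) :=
  Finset.univ.filter (fun e => A e.1 e.2 ∧ e.1 ∈ compOf A R v₀ ∧ e.2 ∉ compOf A R v₀)

lemma bdry_mem {e : V × V} :
    e ∈ bdry A R v₀ ↔ A e.1 e.2 ∧ e.1 ∈ compOf A R v₀ ∧ e.2 ∉ compOf A R v₀ := by
  simp [bdry]

lemma bdry_head_R (hT : IsPolytree A) (hv₀ : v₀ ∉ R) {e : V × V} (he : e ∈ bdry A R v₀) :
    e.2 ∈ R := by
  rw [bdry_mem] at he
  by_contra h
  exact he.2.2 (compOf_closed he.2.1 hv₀ (underlying_adj3 hT he.1) h)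

lemma bdry_edge_ne (hT : IsPolytree A) (hv₀ : v₀ ∉ R) {e e' : V × V}
    (he : e ∈ bdry A R v₀) (he' : e' ∈ bdry A R v₀) (hne : e ≠ e') :
    s(e.1, e.2) ≠ s(e'.1, e'.2) := by
  intro hs
  have h2 := bdry_head_R hT hv₀ he
  have h2' := bdry_head_R hT hv₀ he'
  have h1 := compOf_not_mem_R hv₀ (bdry_mem.mp he).2.1
  have h1' := compOf_not_mem_R hv₀ (bdry_mem.mp he').2.1
  rcases Sym2.eq_iff.mp hs with ⟨hA, hB⟩ | ⟨hA, hB⟩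
  · exact hne (Prod.ext hA hB)
  · rw [hA] at h1; exact h1 h2'

/-- Elements of the component are in `C⁻` of every boundary arc. -/
lemma compOf_cminus (hT : IsPolytree A) (hv₀ : v₀ ∉ R) {e : V × V} (he : e ∈ bdry A R v₀)
    {u : V} (hu : u ∈ compOf A R v₀) : InCminus A e.1 e.2 u := by
  have hbR := bdry_head_R hT hv₀ he
  have h1 := (bdry_mem.mp he).2.1
  exact ((compOf_reach_del h1 hv₀ hbR).symm).trans (compOf_reach_del hu hv₀ hbR)

lemma compOf_not_cplus (hT : IsPolytree A) (hv₀ : v₀ ∉ R) {e : V × V} (he : e ∈ bdry A R v₀)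
    {u : V} (hu : u ∈ compOf A R v₀) : ¬ InCplus A e.1 e.2 u := fun h =>
  not_cminus_cplus hT (bdry_mem.mp he).1 u ⟨compOf_cminus hT hv₀ he hu, h⟩

/-- Existence: every vertex outside the component lies in some boundary `C⁺`. -/
lemma exists_bdry_cplus (hT : IsPolytree A) (hv₀ : v₀ ∉ R)
    (hR : ∀ u ∈ R, ∀ w, A u w → w ∈ R) {v : V} (hv : v ∉ compOf A R v₀) :
    ∃ e ∈ bdry A R v₀, InCplus A e.1 e.2 v := by
  have key : ∀ w : V, w ∈ compOf A R v₀ ∨ ∃ e ∈ bdry A R v₀, InCplus A e.1 e.2 w := by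
    intro w
    have hreach : (underlying A).Reachable v₀ w := (hT.2.2.isConnected) v₀ w
    rw [SimpleGraph.reachable_iff_reflTransGen] at hreach
    induction hreach with
    | refl => exact Or.inl (compOf_self hv₀)
    | tail _ hadj ih =>
      rename_i x y _
      rcases ih with hx | ⟨e, he, hplus⟩
      · by_cases hyC : y ∈ compOf A R v₀
        · exact Or.inl hyC
        · -- y ∉ C, x ∈ C : boundary arc (x, y)
          have hyR : y ∈ R := by
            by_contra h; exact hyC (compOf_closed hx hv₀ hadj h)
          have haxy : A x y := by
            rcases hadj.2 with h | h
            · exact h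
            · exact absurd (hR y hyR x h) (compOf_not_mem_R hv₀ hx)
          refine Or.inr ⟨(x, y), bdry_mem.mpr ⟨haxy, hx, hyC⟩, SimpleGraph.Reachable.refl _⟩
      · by_cases hs : s(x, y) = s(e.1, e.2)
        · rcases Sym2.eq_iff.mp hs with ⟨rfl, rfl⟩ | ⟨rfl, rfl⟩
          · exact Or.inr ⟨e, he, SimpleGraph.Reachable.refl _⟩
          · exact Or.inl (bdry_mem.mp he).2.1
        · exact Or.inr ⟨e, he, cplus_extend hplus hadj (by simpa using hs)⟩
  rcases key v with h | h
  · exact absurd h hv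
  · exact h

/-- Uniqueness: distinct boundary arcs have disjoint `C⁺`s. -/
lemma bdry_cplus_disjoint (hT : IsPolytree A) (hv₀ : v₀ ∉ R) {e e' : V × V}
    (he : e ∈ bdry A R v₀) (he' : e' ∈ bdry A R v₀) (hne : e ≠ e') {v : V}
    (h1 : InCplus A e.1 e.2 v) (h2 : InCplus A e'.1 e'.2 v) : False := by
  have hae := (bdry_mem.mp he).1
  have hae' := (bdry_mem.mp he').1
  have hedgene := bdry_edge_ne hT hv₀ he' he (Ne.symm hne)   -- s(e'.1,e'.2) ≠ s(e.1,e.2)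
  -- e'.2 ∈ C⁻ of e
  have hb'm : InCminus A e.1 e.2 e'.2 :=
    cminus_extend (compOf_cminus hT hv₀ he (bdry_mem.mp he').2.1)
      (underlying_adj3 hT hae') hedgene
  -- e.1 ∈ C⁻ of e'
  have ham : InCminus A e'.1 e'.2 e.1 :=
    compOf_cminus hT hv₀ he' (bdry_mem.mp he).2.1
  -- everything in C⁺ of e' is in C⁻ of e
  have key : ∀ w : V, InCplus A e'.1 e'.2 w → InCminus A e.1 e.2 w := by
    intro w hw
    have : ∀ w, ((underlying A).deleteEdges {s(e'.1, e'.2)}).Reachable e'.2 w →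
        InCplus A e'.1 e'.2 w ∧ InCminus A e.1 e.2 w := by
      intro w hw
      rw [SimpleGraph.reachable_iff_reflTransGen] at hw
      induction hw with
      | refl => exact ⟨SimpleGraph.Reachable.refl _, hb'm⟩
      | tail _ hadj ih =>
        rename_i x y _
        have hadj' : (underlying A).Adj x y ∧ s(x, y) ∉ ({s(e'.1, e'.2)} : Set (Sym2 V)) := by
          rw [← SimpleGraph.deleteEdges_adj]; exact hadj
        have hxyplus : InCplus A e'.1 e'.2 y :=
          cplus_extend ih.1 hadj'.1 (by simpa using hadj'.2)
        refine ⟨hxyplus, ?_⟩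
        by_cases hs : s(x, y) = s(e.1, e.2)
        · rcases Sym2.eq_iff.mp hs with ⟨rfl, rfl⟩ | ⟨rfl, rfl⟩
          · exact absurd ⟨ham, ih.1⟩ (not_cminus_cplus hT hae' _)
          · exact SimpleGraph.Reachable.refl _
        · exact cminus_extend ih.2 hadj'.1 hs
    exact (this w hw).2
  exact not_cminus_cplus hT hae v ⟨key v h2, h1⟩

/-- Splitting a finset by the component partition. -/
lemma filter_not_comp_card (hT : IsPolytree A) (hv₀ : v₀ ∉ R)
    (hR : ∀ u ∈ R, ∀ w, A u w → w ∈ R) (Z : Finset V) :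
    (Z.filter (· ∉ compOf A R v₀)).card
      = ∑ e ∈ bdry A R v₀, (Z.filter (fun v => InCplus A e.1 e.2 v)).card := by
  have hbi : Z.filter (· ∉ compOf A R v₀)
      = (bdry A R v₀).biUnion (fun e => Z.filter (fun v => InCplus A e.1 e.2 v)) := by
    ext v
    simp only [Finset.mem_filter, Finset.mem_biUnion]
    constructor
    · rintro ⟨hvZ, hvC⟩
      obtain ⟨e, he, hplus⟩ := exists_bdry_cplus hT hv₀ hR hvC
      exact ⟨e, he, hvZ, hplus⟩
    · rintro ⟨e, he, hvZ, hplus⟩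
      exact ⟨hvZ, fun hC => compOf_not_cplus hT hv₀ he hC hplus⟩
  rw [hbi]
  refine Finset.card_biUnion ?_
  intro e he e' he' hne
  refine Finset.disjoint_left.mpr ?_
  intro v hv hv'
  exact bdry_cplus_disjoint hT hv₀ he he' hne (Finset.mem_filter.mp hv).2
    (Finset.mem_filter.mp hv').2

/-- Per-component inequality. -/
lemma keyComp (hT : IsPolytree A) (X Y : Finset V) (hXY : X.card = Y.card)
    (hw : ∀ a b, A a b →
      (Y.filter (fun v => InCminus A a b v)).card ≤ (X.filter (fun v => InCminus A a b v)).card)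
    (hv₀ : v₀ ∉ R) (hR : ∀ u ∈ R, ∀ w, A u w → w ∈ R) :
    (Y.filter (· ∈ compOf A R v₀)).card ≤ (X.filter (· ∈ compOf A R v₀)).card := by
  have hsplit : ∀ Z : Finset V, (Z.filter (· ∈ compOf A R v₀)).card
      + (Z.filter (· ∉ compOf A R v₀)).card = Z.card := fun Z =>
    Finset.card_filter_add_card_filter_not _
  have hcompl : ∀ (Z : Finset V) (e : V × V), e ∈ bdry A R v₀ →
      (Z.filter (fun v => InCplus A e.1 e.2 v)).card
        + (Z.filter (fun v => InCminus A e.1 e.2 v)).card = Z.card := by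
    intro Z e he
    have hae := (bdry_mem.mp he).1
    have : Z.filter (fun v => InCplus A e.1 e.2 v)
        = Z.filter (fun v => ¬ InCminus A e.1 e.2 v) := by
      apply Finset.filter_congr
      intro v _
      simp [cplus_iff_not_cminus hT hae v]
    rw [this, add_comm]
    exact Finset.card_filter_add_card_filter_not _
  have hsum : ∑ e ∈ bdry A R v₀, (X.filter (fun v => InCplus A e.1 e.2 v)).card
      ≤ ∑ e ∈ bdry A R v₀, (Y.filter (fun v => InCplus A e.1 e.2 v)).card := by
    refine Finset.sum_le_sum ?_
    intro e he
    have h1 := hcompl X e he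
    have h2 := hcompl Y e he
    have h3 := hw e.1 e.2 (bdry_mem.mp he).1
    omega
  have h1 := hsplit X
  have h2 := hsplit Y
  rw [filter_not_comp_card hT hv₀ hR X] at h1
  rw [filter_not_comp_card hT hv₀ hR Y] at h2
  omega

/-- The flow lemma: in any out-closed set, `Y` has at least as many elements as `X`. -/
lemma flow_lemma (hT : IsPolytree A) (X Y : Finset V) (hXY : X.card = Y.card)
    (hw : ∀ a b, A a b →
      (Y.filter (fun v => InCminus A a b v)).card ≤ (X.filter (fun v => InCminus A a b v)).card)
    (R : Finset V) (hR : ∀ u ∈ R, ∀ w, A u w → w ∈ R) :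
    (X.filter (· ∈ R)).card ≤ (Y.filter (· ∈ R)).card := by
  have main : ∀ (n : ℕ) (R : Finset V), (Finset.univ \ R).card ≤ n →
      (∀ u ∈ R, ∀ w, A u w → w ∈ R) →
      (Y.filter (· ∉ R)).card ≤ (X.filter (· ∉ R)).card := by
    intro n
    induction n with
    | zero =>
      intro R hcard hR
      have hall : ∀ v : V, v ∈ R := by
        intro v
        by_contra h
        have : v ∈ Finset.univ \ R := Finset.mem_sdiff.mpr ⟨Finset.mem_univ v, h⟩
        have := Finset.card_pos.mpr ⟨v, this⟩
        omega
      simp only [hall, not_true_eq_false, Finset.filter_false]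
      simp
    | succ n ih =>
      intro R hcard hR
      by_cases hRall : ∀ v : V, v ∈ R
      · simp only [hRall, not_true_eq_false, Finset.filter_false]; simp
      · push_neg at hRall
        obtain ⟨v₀, hv₀⟩ := hRall
        set C : Finset V := Finset.univ.filter (· ∈ compOf A R v₀) with hC
        set R' : Finset V := R ∪ C with hR'
        have hmemC : ∀ v, v ∈ C ↔ v ∈ compOf A R v₀ := by
          intro v; simp [hC]
        have hR'closed : ∀ u ∈ R', ∀ w, A u w → w ∈ R' := by
          intro u hu w hw
          rcases Finset.mem_union.mp hu with h | h
          · exact Finset.mem_union_left _ (hR u h w hw)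
          · by_cases hwR : w ∈ R
            · exact Finset.mem_union_left _ hwR
            · refine Finset.mem_union_right _ ((hmemC w).mpr ?_)
              exact compOf_closed ((hmemC u).mp h) hv₀ (underlying_adj3 hT hw) hwR
        have hv₀C : v₀ ∈ C := (hmemC v₀).mpr (compOf_self hv₀)
        have hsub : Finset.univ \ R' ⊆ Finset.univ \ R := by
          apply Finset.sdiff_subset_sdiff (le_refl _) Finset.subset_union_left
        have hv₀R' : v₀ ∈ R' := Finset.mem_union_right _ hv₀C
        have hcard' : (Finset.univ \ R').card ≤ n := by
          have hssub : Finset.univ \ R' ⊂ Finset.univ \ R := by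
            refine Finset.ssubset_iff_of_subset hsub |>.mpr ?_
            exact ⟨v₀, Finset.mem_sdiff.mpr ⟨Finset.mem_univ _, hv₀⟩,
              fun h => (Finset.mem_sdiff.mp h).2 hv₀R'⟩
          have := Finset.card_lt_card hssub
          omega
        have hIH := ih R' hcard' hR'closed
        have hkey := keyComp hT X Y hXY hw hv₀ hR
        -- split filter (∉ R) into filter (∈ C) and filter (∉ R')
        have hsplitZ : ∀ Z : Finset V, (Z.filter (· ∉ R)).card
            = (Z.filter (· ∈ compOf A R v₀)).card + (Z.filter (· ∉ R')).card := by
          intro Z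
          have hdisj : Disjoint (Z.filter (· ∈ compOf A R v₀)) (Z.filter (· ∉ R')) := by
            refine Finset.disjoint_left.mpr ?_
            intro v hv hv'
            have h1 := (Finset.mem_filter.mp hv).2
            have h2 := (Finset.mem_filter.mp hv').2
            exact h2 (Finset.mem_union_right _ ((hmemC v).mpr h1))
          have hunion : Z.filter (· ∉ R)
              = (Z.filter (· ∈ compOf A R v₀)) ∪ (Z.filter (· ∉ R')) := by
            ext v
            simp only [Finset.mem_filter, Finset.mem_union]
            constructor
            · rintro ⟨hvZ, hvR⟩
              by_cases hvC : v ∈ compOf A R v₀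
              · exact Or.inl ⟨hvZ, hvC⟩
              · refine Or.inr ⟨hvZ, fun h => ?_⟩
                rcases Finset.mem_union.mp h with h | h
                · exact hvR h
                · exact hvC ((hmemC v).mp h)
            · rintro (⟨hvZ, hvC⟩ | ⟨hvZ, hvR'⟩)
              · exact ⟨hvZ, compOf_not_mem_R hv₀ hvC⟩
              · exact ⟨hvZ, fun h => hvR' (Finset.mem_union_left _ h)⟩
          rw [hunion, Finset.card_union_of_disjoint hdisj]
        rw [hsplitZ X, hsplitZ Y]
        omega
  have h1 := main (Finset.univ \ R).card R (le_refl _) hR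
  have hX := Finset.card_filter_add_card_filter_not (s := X) (p := (· ∈ R))
  have hY := Finset.card_filter_add_card_filter_not (s := Y) (p := (· ∈ R))
  omega

end Flow


section Matching
variable {A : V → V → Prop} [Fintype V] [DecidableEq V]

lemma exists_matching (hT : IsPolytree A) (X Y : Finset V) (hXY : X.card = Y.card)
    (hw : ∀ a b, A a b →
      (Y.filter (fun v => InCminus A a b v)).card ≤ (X.filter (fun v => InCminus A a b v)).card) :
    ∃ σ : V → V, Set.InjOn σ ↑X ∧ (∀ x ∈ X, σ x ∈ Y ∧ Relation.ReflTransGen A x (σ x)) ∧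
      ∀ y ∈ Y, ∃ x ∈ X, σ x = y := by
  have hall : ∀ s : Finset {x // x ∈ X},
      s.card ≤ (s.biUnion (fun x => Y.filter (fun y => Relation.ReflTransGen A x.1 y))).card := by
    intro s
    set S : Finset V := s.image Subtype.val with hS
    have hScard : S.card = s.card := Finset.card_image_of_injective _ Subtype.val_injective
    set R : Finset V := Finset.univ.filter (fun v => ∃ x ∈ S, Relation.ReflTransGen A x v) with hRdef
    have hmemR : ∀ v, v ∈ R ↔ ∃ x ∈ S, Relation.ReflTransGen A x v := by
      intro v; simp [hRdef]
    have hRclosed : ∀ u ∈ R, ∀ w, A u w → w ∈ R := by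
      intro u hu w hw
      obtain ⟨x, hx, hr⟩ := (hmemR u).mp hu
      exact (hmemR w).mpr ⟨x, hx, hr.tail hw⟩
    have hflow := flow_lemma hT X Y hXY hw R hRclosed
    have hSsub : S ⊆ X.filter (· ∈ R) := by
      intro x hx
      refine Finset.mem_filter.mpr ⟨?_, (hmemR x).mpr ⟨x, hx, Relation.ReflTransGen.refl⟩⟩
      obtain ⟨⟨y, hy⟩, _, rfl⟩ := Finset.mem_image.mp hx
      exact hy
    have hYsub : Y.filter (· ∈ R) ⊆ s.biUnion
        (fun x => Y.filter (fun y => Relation.ReflTransGen A x.1 y)) := by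
      intro y hy
      obtain ⟨hyY, hyR⟩ := Finset.mem_filter.mp hy
      obtain ⟨x, hx, hr⟩ := (hmemR y).mp hyR
      obtain ⟨xs, hxs, rfl⟩ := Finset.mem_image.mp hx
      exact Finset.mem_biUnion.mpr ⟨xs, hxs, Finset.mem_filter.mpr ⟨hyY, hr⟩⟩
    calc s.card = S.card := hScard.symm
      _ ≤ (X.filter (· ∈ R)).card := Finset.card_le_card hSsub
      _ ≤ (Y.filter (· ∈ R)).card := hflow
      _ ≤ _ := Finset.card_le_card hYsub
  obtain ⟨f, hfinj, hf⟩ := (Finset.all_card_le_biUnion_card_iff_exists_injective _).mp hall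
  set σ : V → V := fun v => if h : v ∈ X then f ⟨v, h⟩ else v with hσ
  have hσval : ∀ x (h : x ∈ X), σ x = f ⟨x, h⟩ := by intro x h; simp [hσ, h]
  have hinj : Set.InjOn σ ↑X := by
    intro x hx y hy hxy
    rw [hσval x hx, hσval y hy] at hxy
    exact congrArg Subtype.val (hfinj hxy)
  have hmem : ∀ x ∈ X, σ x ∈ Y ∧ Relation.ReflTransGen A x (σ x) := by
    intro x hx
    rw [hσval x hx]
    have := hf ⟨x, hx⟩
    exact ⟨(Finset.mem_filter.mp this).1, (Finset.mem_filter.mp this).2⟩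
  refine ⟨σ, hinj, hmem, ?_⟩
  have himg : X.image σ = Y := by
    apply Finset.eq_of_subset_of_card_le
    · intro y hy
      obtain ⟨x, hx, rfl⟩ := Finset.mem_image.mp hy
      exact (hmem x hx).1
    · rw [Finset.card_image_of_injOn hinj, hXY]
  intro y hy
  rw [← himg] at hy
  obtain ⟨x, hx, rfl⟩ := Finset.mem_image.mp hy
  exact ⟨x, hx, rfl⟩

end Matching

section Small
variable {A : V → V → Prop}

lemma sndVtx_eq (p : DirPath A) (h : 1 ≤ p.len) : p.sndVtx = p.vtx ⟨1, by omega⟩ := by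
  unfold DirPath.sndVtx
  congr 1
  exact Fin.ext (by simp; omega)

lemma arc_src_snd (p : DirPath A) (h : 1 ≤ p.len) : A p.src p.sndVtx := by
  have harc := p.arc ⟨0, h⟩
  rw [sndVtx_eq p h]
  have h1 : ((⟨0, h⟩ : Fin p.len).castSucc) = (0 : Fin (p.len + 1)) := rfl
  have h2 : ((⟨0, h⟩ : Fin p.len).succ) = (⟨1, by omega⟩ : Fin (p.len + 1)) := rfl
  rw [h1, h2] at harc
  exact harc

lemma arc_pen_snk (p : DirPath A) (h : 1 ≤ p.len) : A p.penVtx p.snk := by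
  have harc := p.arc ⟨p.len - 1, by omega⟩
  have h1 : ((⟨p.len - 1, by omega⟩ : Fin p.len).castSucc) = (⟨p.len - 1, by omega⟩ : Fin (p.len + 1)) := rfl
  have h2 : ((⟨p.len - 1, by omega⟩ : Fin p.len).succ) = Fin.last p.len := Fin.ext (by simp; omega)
  rw [h1, h2] at harc
  exact harc

lemma rtg_snd_pen (p : DirPath A) (h : 2 ≤ p.len) :
    Relation.ReflTransGen A p.sndVtx p.penVtx := by
  rw [sndVtx_eq p (by omega)]
  exact dirPath_rtg_le p ⟨1, by omega⟩ ⟨p.len - 1, by omega⟩ (by simp [Fin.le_def]; omega)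

lemma snd_ne_src (p : DirPath A) (h : 1 ≤ p.len) : p.sndVtx ≠ p.src := by
  rw [sndVtx_eq p h]
  intro heq
  have := p.inj heq
  simp [Fin.ext_iff] at this

lemma pen_ne_snk (p : DirPath A) (h : 1 ≤ p.len) : p.penVtx ≠ p.snk := by
  intro heq
  have := p.inj heq
  simp [DirPath.penVtx, Fin.ext_iff, Fin.last] at this
  omega

end Small

/-- Without rigid tokens and blocking arcs, a path family satisfying
(P1)–(P4) exists iff there are maps `f : I⁰ → N⁺(I⁰)`, `g : Iᵗ → N⁻(Iᵗ)`
satisfying (C1)–(C4). -/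
theorem stmt_12 [Fintype V] [DecidableEq V] (A : V → V → Prop) (hT : IsPolytree A)
    (I0 It : Finset V) (h0 : IndepF A I0) (ht : IndepF A It) (hcard : I0.card = It.card)
    (hnr : ∀ v, ¬ RigidTok A I0 It v) (hnb : ∀ u v, ¬ BlockingArc A I0 It u v) :
    (∃ P : Fin I0.card → DirPath A, PathSetConds I0 It P) ↔
      ∃ f g : V → V, Set.InjOn f ↑I0 ∧ Set.InjOn g ↑It ∧
        (∀ s ∈ I0, A s (f s) ∧ f s ∉ I0) ∧
        (∀ t ∈ It, A (g t) t ∧ g t ∉ It) ∧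
        ∀ a b, A a b → 0 ≤ wArc A (I0.image f) (It.image g) a b := by
  constructor
  · rintro ⟨P, hlen, ⟨hsrcinj, hsnkinj, hsrcimg, hsnkimg⟩, hP3, hP4⟩
    set f : V → V := fun v => if h : ∃ i, (P i).src = v then (P h.choose).sndVtx else v with hfdef
    set g : V → V := fun v => if h : ∃ i, (P i).snk = v then (P h.choose).penVtx else v with hgdef
    have hex0 : ∀ s ∈ I0, ∃ i, (P i).src = s := by
      intro s hs
      rw [← hsrcimg] at hs
      obtain ⟨i, _, hi⟩ := Finset.mem_image.mp hs
      exact ⟨i, hi⟩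
    have hext : ∀ t ∈ It, ∃ i, (P i).snk = t := by
      intro t h
      rw [← hsnkimg] at h
      obtain ⟨i, _, hi⟩ := Finset.mem_image.mp h
      exact ⟨i, hi⟩
    have hfval : ∀ s (h : ∃ i, (P i).src = s), f s = (P h.choose).sndVtx := by
      intro s h; simp only [hfdef, dif_pos h]
    have hgval : ∀ t (h : ∃ i, (P i).snk = t), g t = (P h.choose).penVtx := by
      intro t h; simp only [hgdef, dif_pos h]
    -- key: for s ∈ I0 with chosen index i, src (P i) = s and f s = sndVtx (P i)
    have hfinj : Set.InjOn f ↑I0 := by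
      intro s hs s' hs' heq
      have h := hex0 s hs; have h' := hex0 s' hs'
      rw [hfval s h, hfval s' h'] at heq
      have : h.choose = h'.choose := by
        by_contra hne
        exact hP3 _ _ hne heq
      rw [← h.choose_spec, ← h'.choose_spec, this]
    have hginj : Set.InjOn g ↑It := by
      intro t h1 t' h1' heq
      have h := hext t h1; have h' := hext t' h1'
      rw [hgval t h, hgval t' h'] at heq
      have : h.choose = h'.choose := by
        by_contra hne
        exact hP4 _ _ hne heq
      rw [← h.choose_spec, ← h'.choose_spec, this]
    have hf2 : ∀ s ∈ I0, A s (f s) ∧ f s ∉ I0 := by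
      intro s hs
      have h := hex0 s hs
      have hsrc : (P h.choose).src = s := h.choose_spec
      have harc : A s (f s) := by
        rw [hfval s h]
        have h2 := arc_src_snd (P h.choose) (by have := hlen h.choose; omega)
        rw [hsrc] at h2
        exact h2
      refine ⟨harc, fun hmem => ?_⟩
      exact h0 s hs (f s) hmem (underlying_adj hT harc)
    have hg2 : ∀ t ∈ It, A (g t) t ∧ g t ∉ It := by
      intro t h1
      have h := hext t h1
      have hsnk : (P h.choose).snk = t := h.choose_spec
      have harc : A (g t) t := by
        rw [hgval t h]
        have h2 := arc_pen_snk (P h.choose) (by have := hlen h.choose; omega)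
        rw [hsnk] at h2
        exact h2
      refine ⟨harc, fun hmem => ?_⟩
      exact ht (g t) hmem t h1 (underlying_adj hT harc)
    refine ⟨f, g, hfinj, hginj, hf2, hg2, ?_⟩
    intro a b hab
    rw [wArc, sub_nonneg, Nat.cast_le]
    rw [Finset.filter_image, Finset.filter_image]
    rw [Finset.card_image_of_injOn (hginj.mono (by intro x hx; exact (Finset.mem_filter.mp hx).1))]
    rw [Finset.card_image_of_injOn (hfinj.mono (by intro x hx; exact (Finset.mem_filter.mp hx).1))]
    -- injection t ↦ src of path ending at t
    refine Finset.card_le_card_of_injOn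
      (fun t => if h : ∃ i, (P i).snk = t then (P h.choose).src else t) ?_ ?_
    · intro t htmem
      obtain ⟨htIt, htC⟩ := Finset.mem_filter.mp htmem
      have h := hext t htIt
      simp only [dif_pos h]
      set i := h.choose with hi
      have hsnk : (P i).snk = t := h.choose_spec
      refine Finset.mem_filter.mpr ⟨?_, ?_⟩
      · rw [← hsrcimg]; exact Finset.mem_image.mpr ⟨i, Finset.mem_univ i, rfl⟩
      · -- f (src (P i)) = sndVtx (P i) ∈ C⁻
        have hsrcmem : (P i).src ∈ I0 := by
          rw [← hsrcimg]; exact Finset.mem_image.mpr ⟨i, Finset.mem_univ i, rfl⟩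
        have h' := hex0 _ hsrcmem
        rw [hfval _ h']
        have hch : h'.choose = i := hsrcinj h'.choose_spec
        rw [hch]
        -- pen (P i) ∈ C⁻ hence snd (P i) ∈ C⁻
        have hpen : InCminus A a b (P i).penVtx := by
          rw [hgval t h] at htC; exact htC
        by_contra hsnd
        exact (not_cminus_forward hT hab (rtg_snd_pen _ (hlen i)) hsnd) hpen
    · intro t htmem t' htmem' heq
      have h := hext t (Finset.mem_filter.mp htmem).1
      have h' := hext t' (Finset.mem_filter.mp htmem').1
      simp only [dif_pos h, dif_pos h'] at heq
      have : h.choose = h'.choose := hsrcinj heq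
      rw [← h.choose_spec, ← h'.choose_spec, this]
  · rintro ⟨f, g, hfi, hgi, hf, hg, hw⟩
    have hnc : ∀ u v : V, A u v → Relation.ReflTransGen A v u → False :=
      fun u v h h' => noDirCycle hT h h'
    set X := I0.image f with hX
    set Y := It.image g with hY
    have hXcard : X.card = I0.card := Finset.card_image_of_injOn hfi
    have hYcard : Y.card = It.card := Finset.card_image_of_injOn hgi
    have hXY : X.card = Y.card := by rw [hXcard, hYcard, hcard]
    have hw' : ∀ a b, A a b →
        (Y.filter (fun v => InCminus A a b v)).card
          ≤ (X.filter (fun v => InCminus A a b v)).card := by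
      intro a b hab
      have h := hw a b hab
      rw [wArc, sub_nonneg, Nat.cast_le] at h
      exact h
    obtain ⟨σ, hσinj, hσmem, _⟩ := exists_matching hT X Y hXY hw'
    set sfun : Fin I0.card → V := fun i => ((I0.equivFin.symm i : ↥I0) : V) with hsfun
    have hsmem : ∀ i, sfun i ∈ I0 := fun i => (I0.equivFin.symm i).2
    have hsinj : Function.Injective sfun :=
      fun i j h => I0.equivFin.symm.injective (Subtype.ext h)
    have hssurj : ∀ s ∈ I0, ∃ i, sfun i = s := by
      intro s hs
      exact ⟨I0.equivFin ⟨s, hs⟩, by simp [hsfun]⟩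
    have hbuild : ∀ i : Fin I0.card, ∃ (p : DirPath A) (t : V), t ∈ It ∧
        p.src = sfun i ∧ p.snk = t ∧ 2 ≤ p.len ∧ p.sndVtx = f (sfun i) ∧
        p.penVtx = g t ∧ g t = σ (f (sfun i)) := by
      intro i
      have hs : sfun i ∈ I0 := hsmem i
      have hxX : f (sfun i) ∈ X := Finset.mem_image_of_mem f hs
      obtain ⟨hσY, hσr⟩ := hσmem _ hxX
      obtain ⟨t, htIt, hgt⟩ := Finset.mem_image.mp hσY
      obtain ⟨mid, hmsrc, hmsnk⟩ := exists_dirPath hT hnc hσr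
      have harc2 : A mid.snk t := by rw [hmsnk, ← hgt]; exact (hg t htIt).1
      have htmem : t ∉ Set.range mid.vtx := by
        rintro ⟨i0, hi0⟩
        exact hnc _ _ harc2 (hi0 ▸ dirPath_rtg_le mid i0 (Fin.last mid.len) (Fin.le_last i0))
      have hqsrc : (mid.append t harc2 htmem).src = f (sfun i) := by
        rw [append_src, hmsrc]
      have harc1 : A (sfun i) (mid.append t harc2 htmem).src := by
        rw [hqsrc]; exact (hf _ hs).1
      have hsmem' : sfun i ∉ Set.range (mid.append t harc2 htmem).vtx := by
        rintro ⟨i0, hi0⟩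
        exact hnc _ _ harc1
          (hi0 ▸ dirPath_rtg_le (mid.append t harc2 htmem) 0 i0 (Fin.zero_le i0))
      refine ⟨(mid.append t harc2 htmem).prepend (sfun i) harc1 hsmem', t, htIt,
        ?_, ?_, ?_, ?_, ?_, hgt⟩
      · rw [prepend_src]
      · rw [prepend_snk, append_snk]
      · rw [prepend_len, append_len]; omega
      · rw [prepend_sndVtx, hqsrc]
      · rw [prepend_penVtx _ _ _ _ (by rw [append_len]; omega), append_penVtx, hmsnk]
        exact hgt.symm
    choose Pp Tt hTt hsrc hsnk hlen2 hsnd hpen hgteq using hbuild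
    have hXiX : ∀ i, f (sfun i) ∈ X := fun i => Finset.mem_image_of_mem f (hsmem i)
    have hidx : ∀ i j : Fin I0.card, g (Tt i) = g (Tt j) → i = j := by
      intro i j hEq
      rw [hgteq i, hgteq j] at hEq
      have h1 : f (sfun i) = f (sfun j) := hσinj (hXiX i) (hXiX j) hEq
      have h2 : sfun i = sfun j := hfi (hsmem i) (hsmem j) h1
      exact hsinj h2
    have hTtinj : Function.Injective Tt := by
      intro i j h
      exact hidx i j (by rw [h])
    refine ⟨Pp, hlen2, ⟨?_, ?_, ?_, ?_⟩, ?_, ?_⟩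
    · intro i j h
      simp only [hsrc] at h
      exact hsinj h
    · intro i j h
      simp only [hsnk] at h
      exact hTtinj h
    · ext s
      simp only [Finset.mem_image, Finset.mem_univ, true_and]
      constructor
      · rintro ⟨i, rfl⟩; rw [hsrc]; exact hsmem i
      · intro hs
        obtain ⟨i, hi⟩ := hssurj s hs
        exact ⟨i, by rw [hsrc, hi]⟩
    · have himg : Finset.univ.image (fun i => (Pp i).snk) = Finset.univ.image Tt := by
        apply Finset.image_congr
        intro i _
        exact hsnk i
      rw [himg]
      apply Finset.eq_of_subset_of_card_le
      · intro t htmem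
        obtain ⟨i, _, rfl⟩ := Finset.mem_image.mp htmem
        exact hTt i
      · rw [Finset.card_image_of_injective _ hTtinj, Finset.card_univ, Fintype.card_fin]
        omega
    · intro i j hne hEq
      rw [hsnd i, hsnd j] at hEq
      exact hne (hsinj (hfi (hsmem i) (hsmem j) hEq))
    · intro i j hne hEq
      rw [hpen i, hpen j] at hEq
      have : Tt i = Tt j := hgi (hTt i) (hTt j) hEq
      exact hne (hTtinj this)
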